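/- In the sequential local complementation protocol on a path graph v_1,...,v_m, for any two even-position vertices e_i = v_{2i} and e_j = v_{2j} with i < j, the vertices e_i and e_j are adjacent for the first time exactly after the local complementation at v_{2j-1}, and thereafter each subsequent local complementation at an odd-position vertex removes the edge {e_i, e_j} while each local complementation at an even-position vertex restores it. -/

import Mathlib

variable {V : Type*}

/-- Local complementation at vertex `v`. -/
def lc (G : SimpleGraph V) (v : V) : SimpleGraph V where
  Adj a b := a ≠ b ∧ (((G.Adj v a ∧ G.Adj v b) ∧ ¬ G.Adj a b) ∨ (¬(G.Adj v a ∧ G.Adj v b) ∧ G.Adj a b))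
  symm := by
    constructor
    rintro a b ⟨hne, h⟩
    refine ⟨hne.symm, ?_⟩
    rcases h with ⟨⟨h1, h2⟩, h3⟩ | ⟨h1, h2⟩
    · exact Or.inl ⟨⟨h2, h1⟩, fun hb => h3 hb.symm⟩
    · exact Or.inr ⟨fun hb => h1 ⟨hb.2, hb.1⟩, h2.symm⟩
  loopless := by constructor; rintro a ⟨hne, -⟩; exact hne rfl

/-- Vertex deletion: remove `v` and all incident edges (leaving `v` isolated). -/
def del (G : SimpleGraph V) (v : V) : SimpleGraph V where
  Adj a b := G.Adj a b ∧ a ≠ v ∧ b ≠ v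
  symm := by constructor; rintro a b ⟨h, ha, hb⟩; exact ⟨h.symm, hb, ha⟩
  loopless := by constructor; rintro a ⟨h, -⟩; exact G.loopless.irrefl a h

def seqLC (G : SimpleGraph V) (l : List V) : SimpleGraph V := l.foldl lc G

/-- Path graph on vertices 1,...,n inside ℕ. -/
def pathN (n : ℕ) : SimpleGraph ℕ :=
  SimpleGraph.fromRel (fun a b => 1 ≤ a ∧ a + 1 = b ∧ b ≤ n)

def Xmeas (G : SimpleGraph V) (v w : V) : SimpleGraph V :=
  lc (del (lc (lc G w) v) v) w

def induceOn (G : SimpleGraph V) (S : Set V) : SimpleGraph V where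
  Adj a b := G.Adj a b ∧ a ∈ S ∧ b ∈ S
  symm := by constructor; rintro a b ⟨h, ha, hb⟩; exact ⟨h.symm, hb, ha⟩
  loopless := by constructor; rintro a ⟨h, -⟩; exact G.loopless.irrefl a h

def starG (c : V) : SimpleGraph V where
  Adj a b := a ≠ b ∧ (a = c ∨ b = c)
  symm := by constructor; rintro a b ⟨hne, h⟩; exact ⟨hne.symm, h.symm⟩
  loopless := by constructor; rintro a ⟨hne, -⟩; exact hne rfl

def gridGraph : SimpleGraph (ℤ × ℤ) where
  Adj u v := (u.1 - v.1).natAbs + (u.2 - v.2).natAbs = 1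
  symm := by
    constructor
    intro u v h
    omega
  loopless := by constructor; intro u h; simp at h


def Pinv (m t a b : ℕ) : Prop :=
  1 ≤ a ∧ b ≤ m ∧ ((b ≤ t ∧ b % 2 = t % 2) ∨ b = t + 1 ∨ (b = a + 1 ∧ t + 1 ≤ a))

lemma lc_adj (G : SimpleGraph ℕ) (v a b : ℕ) :
    (lc G v).Adj a b ↔ a ≠ b ∧ (((G.Adj v a ∧ G.Adj v b) ∧ ¬ G.Adj a b) ∨
      (¬(G.Adj v a ∧ G.Adj v b) ∧ G.Adj a b)) := Iff.rfl

lemma pathN_adj (n a b : ℕ) :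
    (pathN n).Adj a b ↔ a ≠ b ∧ ((1 ≤ a ∧ a + 1 = b ∧ b ≤ n) ∨ (1 ≤ b ∧ b + 1 = a ∧ a ≤ n)) := by
  simp [pathN, SimpleGraph.fromRel_adj]

set_option maxHeartbeats 2000000 in
lemma key (m : ℕ) : ∀ t, 1 ≤ t → t + 1 ≤ m → ∀ a b,
    (seqLC (pathN m) (List.range' 2 (t - 1))).Adj a b ↔
      ((a < b ∧ Pinv m t a b) ∨ (b < a ∧ Pinv m t b a)) := by
  intro t
  induction t with
  | zero => omega
  | succ n ih =>
    intro _ hm a b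
    rcases Nat.eq_zero_or_pos n with rfl | hn
    · simp only [seqLC, Nat.zero_add, Nat.sub_self, List.range'_zero, List.range', List.foldl_nil, pathN_adj, Pinv, le_refl, lt_irrefl, true_or, or_true, true_and, and_true, false_or, or_false, false_and, and_false, not_true, not_false_iff]
      omega
    · have hcat : List.range' 2 (n + 1 - 1) = List.range' 2 (n - 1) ++ [n + 1] := by
        have h : n + 1 - 1 = (n - 1) + 1 := by omega
        rw [h, List.range'_concat]
        congr 2
        omega
      rw [hcat]
      have hstep : seqLC (pathN m) (List.range' 2 (n - 1) ++ [n + 1]) =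
          lc (seqLC (pathN m) (List.range' 2 (n - 1))) (n + 1) := by
        simp [seqLC, List.foldl_append]
      have ih' := ih hn (by omega)
      have hN : ∀ x, (seqLC (pathN m) (List.range' 2 (n - 1))).Adj (n + 1) x ↔
          ((1 ≤ x ∧ x ≤ n) ∨ x = n + 2) := by
        intro x
        rw [ih' (n + 1) x]
        simp only [Pinv, le_refl, lt_irrefl, true_or, or_true, true_and, and_true, false_or, or_false, false_and, and_false, not_true, not_false_iff]
        omega
      rw [hstep, lc_adj, hN a, hN b, ih' a b]
      simp only [Pinv, le_refl, lt_irrefl, true_or, or_true, true_and, and_true, false_or, or_false, false_and, and_false, not_true, not_false_iff]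
      omega

/-- for even-position vertices e_i = v_{2i}, e_j = v_{2j} (i < j) of the
path graph, under the sequential local complementation protocol at v₂, v₃, ...,
they become adjacent for the first time exactly after the local complementation at
v_{2j-1}; thereafter each LC at an odd-position vertex removes the edge and each LC
at an even-position vertex restores it (so for t ≥ 2j, adjacency holds iff t is even). -/
theorem path_even_vertices_edge_toggle (m i j : ℕ) (hi : 1 ≤ i) (hij : i < j)
    (hjm : 2 * j + 1 ≤ m) :
    (∀ t, 1 ≤ t → t < 2 * j - 1 →
        ¬ (seqLC (pathN m) (List.range' 2 (t - 1))).Adj (2 * i) (2 * j)) ∧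
    (seqLC (pathN m) (List.range' 2 (2 * j - 2))).Adj (2 * i) (2 * j) ∧
    (∀ t, 2 * j ≤ t → t ≤ m - 2 →
        ((seqLC (pathN m) (List.range' 2 (t - 1))).Adj (2 * i) (2 * j) ↔ t % 2 = 0)) := by
  have h2j : 2 ≤ 2 * j := by omega
  refine ⟨?_, ?_, ?_⟩
  · intro t ht1 ht2
    rw [key m t ht1 (by omega) (2 * i) (2 * j)]
    simp only [Pinv, le_refl, lt_irrefl, true_or, or_true, true_and, and_true, false_or, or_false, false_and, and_false, not_true, not_false_iff]
    omega
  · have h : 2 * j - 2 = (2 * j - 1) - 1 := by omega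
    rw [h, key m (2 * j - 1) (by omega) (by omega) (2 * i) (2 * j)]
    simp only [Pinv, le_refl, lt_irrefl, true_or, or_true, true_and, and_true, false_or, or_false, false_and, and_false, not_true, not_false_iff]
    omega
  · intro t ht1 ht2
    rw [key m t (by omega) (by omega) (2 * i) (2 * j)]
    simp only [Pinv, le_refl, lt_irrefl, true_or, or_true, true_and, and_true, false_or, or_false, false_and, and_false, not_true, not_false_iff]
    omega
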